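/- There exists a housing market H with strict partial order preferences over four agents {a,b,c,d} such that: U (the undominated arcs) has a unique absorbing strongly connected component S = {a,b,c}; the submarket H|_S admits allocations contained in U; the submarket H|_{{d}} has an allocation in its strong core (the loop at d); and yet the strong core of H is empty. Hence the Quint–Wako conditions (a) and (b) are not sufficient for membership in the strong core under partial order preferences. -/

import Mathlib

/-- A housing market: each agent `a` has a strict partial order `pref a`
(`pref a b c` means agent `a` strictly prefers house `b` to house `c`). -/
structure Market (N : Type) where
  pref : N → N → N → Prop
  irrefl : ∀ a b, ¬ pref a b b
  asymm : ∀ a b c, pref a b c → ¬ pref a c b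
  trans : ∀ a b c d, pref a b c → pref a c d → pref a b d

namespace Market

variable {N : Type}

/-- `b` is acceptable to `a`: `b ⪰_a a`, i.e. not `a ≻_a b`. -/
def acceptable (H : Market N) (a b : N) : Prop := ¬ H.pref a a b

/-- Arcs of the underlying digraph `D^H`. -/
def E (H : Market N) : Set (N × N) := {e | H.acceptable e.1 e.2}

/-- Undominated arcs of `D^H`. -/
def undominated (H : Market N) : Set (N × N) :=
  {e | e ∈ H.E ∧ ∀ b', H.acceptable e.1 b' → ¬ H.pref e.1 b' e.2}

/-- A full allocation, given as a function assigning each agent its house. -/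
def IsAllocation (H : Market N) (X : N → N) : Prop :=
  Function.Bijective X ∧ ∀ a, H.acceptable a (X a)

/-- A cycle of length `k ≥ 1` with all arcs in the arc set `A`. -/
def IsCycleIn (A : Set (N × N)) (k : ℕ) (c : ZMod k → N) : Prop :=
  0 < k ∧ Function.Injective c ∧ ∀ i, (c i, c (i + 1)) ∈ A

/-- `E_{[⪰X]}`: arcs `(a,b)` with `b ⪰_a X(a)`. -/
def weakImprove (H : Market N) (X : N → N) : Set (N × N) :=
  {e | e ∈ H.E ∧ ¬ H.pref e.1 (X e.1) e.2}

/-- `E_{[≻X]}`: arcs `(a,b)` with `b ≻_a X(a)`. -/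
def strictImprove (H : Market N) (X : N → N) : Set (N × N) :=
  {e | e ∈ H.E ∧ H.pref e.1 e.2 (X e.1)}

/-- A (weakly) blocking cycle for `X`. -/
def Blocks (H : Market N) (X : N → N) (k : ℕ) (c : ZMod k → N) : Prop :=
  IsCycleIn H.E k c ∧
  (∀ i, ¬ H.pref (c i) (X (c i)) (c (i + 1))) ∧
  (∃ i, H.pref (c i) (c (i + 1)) (X (c i)))

/-- The strong core: allocations admitting no blocking cycle. -/
def InStrongCore (H : Market N) (X : N → N) : Prop :=
  H.IsAllocation X ∧ ¬ ∃ k c, H.Blocks X k c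

/-- A strictly blocking cycle for `X`. -/
def StrictBlocks (H : Market N) (X : N → N) (k : ℕ) (c : ZMod k → N) : Prop :=
  IsCycleIn H.E k c ∧ ∀ i, H.pref (c i) (c (i + 1)) (X (c i))

/-- The core: allocations admitting no strictly blocking cycle. -/
def InCore (H : Market N) (X : N → N) : Prop :=
  H.IsAllocation X ∧ ¬ ∃ k c, H.StrictBlocks X k c

/-- An allocation of the submarket `H|_S`, given as a set of arcs among agents of `S`. -/
def IsAllocationOn (H : Market N) (S : Set N) (X : Set (N × N)) : Prop :=
  X ⊆ H.E ∧ (∀ e ∈ X, e.1 ∈ S ∧ e.2 ∈ S) ∧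
  (∀ a ∈ S, ∃! b, (a, b) ∈ X) ∧ (∀ b ∈ S, ∃! a, (a, b) ∈ X)

/-- A blocking cycle for the arc set `X` within the submarket `H|_S`. -/
def BlocksOn (H : Market N) (S : Set N) (X : Set (N × N)) (k : ℕ) (c : ZMod k → N) : Prop :=
  IsCycleIn H.E k c ∧ (∀ i, c i ∈ S) ∧
  (∀ i b, (c i, b) ∈ X → ¬ H.pref (c i) b (c (i + 1))) ∧
  (∃ i b, (c i, b) ∈ X ∧ H.pref (c i) (c (i + 1)) b)

/-- Membership in the strong core of the submarket `H|_S`. -/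
def InStrongCoreOn (H : Market N) (S : Set N) (X : Set (N × N)) : Prop :=
  H.IsAllocationOn S X ∧ ¬ ∃ k c, H.BlocksOn S X k c

end Market

/-- The arcs of the allocation `X` whose tails lie in `S`. -/
def graphRestrict {N : Type} (X : N → N) (S : Set N) : Set (N × N) :=
  {e | e.1 ∈ S ∧ e.2 = X e.1}

/-- Reachability in the digraph given by arc set `A`. -/
def reach {N : Type} (A : Set (N × N)) : N → N → Prop :=
  Relation.ReflTransGen (fun u v => (u, v) ∈ A)

/-- A strongly connected component of the digraph given by arc set `A`. -/
def IsSCC {N : Type} (A : Set (N × N)) (S : Set N) : Prop :=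
  S.Nonempty ∧ (∀ u ∈ S, ∀ v ∈ S, reach A u v) ∧
  (∀ u ∈ S, ∀ v, reach A u v → reach A v u → v ∈ S)

/-- An absorbing set: a strongly connected component not left by any arc. -/
def IsAbsorbing {N : Type} (A : Set (N × N)) (S : Set N) : Prop :=
  IsSCC A S ∧ ∀ e ∈ A, e.1 ∈ S → e.2 ∈ S

def pfL : List (Fin 4 × Fin 4 × Fin 4) :=
  [(0,1,0),(0,2,0),(0,3,0),(0,2,3),
   (1,0,1),(1,2,1),(1,3,1),(1,2,3),
   (2,0,2),(2,1,2),(2,2,3),(2,0,3),(2,1,3),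
   (3,2,3),(3,3,0),(3,3,1),(3,2,0),(3,2,1)]

def Hex : Market (Fin 4) where
  pref a y z := (a,y,z) ∈ pfL
  irrefl := by decide
  asymm := by decide
  trans := by
    set_option synthInstance.maxSize 2048 in set_option synthInstance.maxHeartbeats 400000 in decide

instance (a y z : Fin 4) : Decidable (Hex.pref a y z) :=
  (inferInstance : Decidable ((a,y,z) ∈ pfL))

instance (e : Fin 4 × Fin 4) : Decidable (e ∈ Hex.E) :=
  (inferInstance : Decidable (¬ Hex.pref e.1 e.1 e.2))

instance (e : Fin 4 × Fin 4) : Decidable (e ∈ Hex.undominated) :=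
  (inferInstance : Decidable ((¬ Hex.pref e.1 e.1 e.2) ∧
    ∀ b', (¬ Hex.pref e.1 e.1 b') → ¬ Hex.pref e.1 b' e.2))

lemma noarc3 : ∀ e ∈ Hex.undominated, e.2 ≠ 3 := by decide

lemma reach_to3 {u : Fin 4} (h : reach Hex.undominated u 3) : u = 3 := by
  rcases (Relation.ReflTransGen.cases_tail h) with h | ⟨b, _, hb⟩
  · exact h.symm
  · exact absurd rfl (noarc3 _ hb)

lemma reach_all : ∀ u v : Fin 4, v ≠ 3 → reach Hex.undominated u v := by
  have e01 : reach Hex.undominated 0 1 := Relation.ReflTransGen.single (by decide)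
  have e02 : reach Hex.undominated 0 2 := Relation.ReflTransGen.single (by decide)
  have e10 : reach Hex.undominated 1 0 := Relation.ReflTransGen.single (by decide)
  have e12 : reach Hex.undominated 1 2 := Relation.ReflTransGen.single (by decide)
  have e20 : reach Hex.undominated 2 0 := Relation.ReflTransGen.single (by decide)
  have e21 : reach Hex.undominated 2 1 := Relation.ReflTransGen.single (by decide)
  have e32 : reach Hex.undominated 3 2 := Relation.ReflTransGen.single (by decide)
  intro u v hv
  fin_cases u <;> fin_cases v <;>
    first
      | exact absurd rfl hv
      | exact Relation.ReflTransGen.refl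
      | exact e01 | exact e02 | exact e10 | exact e12 | exact e20 | exact e21
      | exact e32 | exact e32.trans e20 | exact e32.trans e21

lemma memS3 : ∀ x : Fin 4, x ∈ ({0,1,2} : Set (Fin 4)) ↔ x ≠ 3 := by
  intro x; fin_cases x <;> simp

lemma absorbing_iff : ∀ T : Set (Fin 4), IsAbsorbing Hex.undominated T ↔ T = {0,1,2} := by
  intro T
  constructor
  · rintro ⟨⟨⟨t, ht⟩, hmut, hmax⟩, habs⟩
    have h3 : (3 : Fin 4) ∉ T := by
      intro h3
      have h2 : (2 : Fin 4) ∈ T := habs (3,2) (by decide) h3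
      have := reach_to3 (hmut 2 h2 3 h3)
      exact absurd this (by decide)
    have ht3 : t ≠ 3 := fun h => h3 (h ▸ ht)
    ext x
    rw [memS3]
    constructor
    · intro hx h; exact h3 (h ▸ hx)
    · intro hx
      exact hmax t ht x (reach_all t x hx) (reach_all x t ht3)
  · rintro rfl
    refine ⟨⟨⟨0, by simp⟩, ?_, ?_⟩, ?_⟩
    · intro u _ v hv
      exact reach_all u v ((memS3 v).1 hv)
    · intro u hu v huv _
      rw [memS3]
      intro h
      subst h
      have hu3 := reach_to3 huv
      subst hu3
      exact ((memS3 _).1 hu) rfl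
    · intro e he _
      rw [memS3]
      exact noarc3 e he

def X1 : Set (Fin 4 × Fin 4) := {e | e ∈ ([(0,1),(1,2),(2,0)] : List (Fin 4 × Fin 4))}

instance (e : Fin 4 × Fin 4) : Decidable (e ∈ X1) :=
  (inferInstance : Decidable (e ∈ ([(0,1),(1,2),(2,0)] : List (Fin 4 × Fin 4))))

lemma X1alloc : Hex.IsAllocationOn {0,1,2} X1 ∧ X1 ⊆ Hex.undominated := by
  constructor
  · refine ⟨?_, ?_, ?_, ?_⟩
    · intro e he
      have h : e ∈ ([(0,1),(1,2),(2,0)] : List (Fin 4 × Fin 4)) := he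
      fin_cases h <;> decide
    · intro e he
      have h : e ∈ ([(0,1),(1,2),(2,0)] : List (Fin 4 × Fin 4)) := he
      fin_cases h <;> exact ⟨by simp, by simp⟩
    · intro a ha
      rw [memS3] at ha
      fin_cases a
      · exact ⟨1, by decide, by decide⟩
      · exact ⟨2, by decide, by decide⟩
      · exact ⟨0, by decide, by decide⟩
      · exact absurd rfl ha
    · intro b hb
      rw [memS3] at hb
      fin_cases b
      · exact ⟨2, by decide, by decide⟩
      · exact ⟨0, by decide, by decide⟩
      · exact ⟨1, by decide, by decide⟩
      · exact absurd rfl hb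
  · intro e he
    have h : e ∈ ([(0,1),(1,2),(2,0)] : List (Fin 4 × Fin 4)) := he
    fin_cases h <;> decide

lemma dcore : Hex.InStrongCoreOn {3} {((3 : Fin 4), (3 : Fin 4))} := by
  constructor
  · refine ⟨?_, ?_, ?_, ?_⟩
    · intro e he
      rw [Set.mem_singleton_iff] at he
      subst he; decide
    · intro e he
      rw [Set.mem_singleton_iff] at he
      subst he; exact ⟨rfl, rfl⟩
    · intro a ha
      rw [Set.mem_singleton_iff] at ha
      subst ha
      exact ⟨3, rfl, fun y hy => congrArg Prod.snd (Set.mem_singleton_iff.1 hy)⟩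
    · intro b hb
      rw [Set.mem_singleton_iff] at hb
      subst hb
      exact ⟨3, rfl, fun y hy => congrArg Prod.fst (Set.mem_singleton_iff.1 hy)⟩
  · rintro ⟨k, c, _, hT, _, i, b, hb, hstrict⟩
    have h1 : c i = 3 := congrArg Prod.fst (Set.mem_singleton_iff.1 hb)
    have h2 : b = 3 := congrArg Prod.snd (Set.mem_singleton_iff.1 hb)
    have h3 : c (i + 1) = 3 := Set.mem_singleton_iff.1 (hT (i + 1))
    rw [h1, h2, h3] at hstrict
    exact (by decide : ¬ Hex.pref 3 3 3) hstrict

def c2 (a : Fin 4) : ZMod 2 → Fin 4 := fun i => if i = 0 then a else 2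
def c3 (a : Fin 4) : ZMod 3 → Fin 4 := fun i => if i = 0 then a else if i = 1 then 3 else 2

lemma blocks2 (X : Fin 4 → Fin 4) (a : Fin 4) (ha : a = 0 ∨ a = 1) (hXa : X a = 3) :
    Hex.Blocks X 2 (c2 a) := by
  rcases ha with rfl | rfl
  · refine ⟨⟨by norm_num, by decide, by decide⟩, ?_, 0, ?_⟩
    · intro i; fin_cases i
      · show ¬ Hex.pref 0 (X 0) 2
        rw [hXa]; decide
      · show ¬ Hex.pref 2 (X 2) 0
        exact (by decide : ∀ z, ¬ Hex.pref 2 z 0) _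
    · show Hex.pref 0 2 (X 0)
      rw [hXa]; decide
  · refine ⟨⟨by norm_num, by decide, by decide⟩, ?_, 0, ?_⟩
    · intro i; fin_cases i
      · show ¬ Hex.pref 1 (X 1) 2
        rw [hXa]; decide
      · show ¬ Hex.pref 2 (X 2) 1
        exact (by decide : ∀ z, ¬ Hex.pref 2 z 1) _
    · show Hex.pref 1 2 (X 1)
      rw [hXa]; decide

lemma blocks3 (X : Fin 4 → Fin 4) (a : Fin 4) (ha : a = 0 ∨ a = 1) (hXa : X a ≠ 2)
    (hX3 : X 3 = 3) : Hex.Blocks X 3 (c3 a) := by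
  rcases ha with rfl | rfl
  · refine ⟨⟨by norm_num, by decide, by decide⟩, ?_, 1, ?_⟩
    · intro i; fin_cases i
      · show ¬ Hex.pref 0 (X 0) 3
        exact (by decide : ∀ z, z ≠ 2 → ¬ Hex.pref 0 z 3) _ hXa
      · show ¬ Hex.pref 3 (X 3) 2
        rw [hX3]; decide
      · show ¬ Hex.pref 2 (X 2) 0
        exact (by decide : ∀ z, ¬ Hex.pref 2 z 0) _
    · show Hex.pref 3 2 (X 3)
      rw [hX3]; decide
  · refine ⟨⟨by norm_num, by decide, by decide⟩, ?_, 1, ?_⟩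
    · intro i; fin_cases i
      · show ¬ Hex.pref 1 (X 1) 3
        exact (by decide : ∀ z, z ≠ 2 → ¬ Hex.pref 1 z 3) _ hXa
      · show ¬ Hex.pref 3 (X 3) 2
        rw [hX3]; decide
      · show ¬ Hex.pref 2 (X 2) 1
        exact (by decide : ∀ z, ¬ Hex.pref 2 z 1) _
    · show Hex.pref 3 2 (X 3)
      rw [hX3]; decide

lemma no_core : ∀ X : Fin 4 → Fin 4, ¬ Hex.InStrongCore X := by
  rintro X ⟨⟨⟨hinj, hsurj⟩, hacc⟩, hnb⟩
  apply hnb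
  obtain ⟨v, hv⟩ : ∃ v, X 3 = v := ⟨_, rfl⟩
  fin_cases v
  · have h := hacc 3; rw [hv] at h; exact absurd (by decide) h
  · have h := hacc 3; rw [hv] at h; exact absurd (by decide) h
  · -- X 3 = 2
    obtain ⟨a, ha⟩ := hsurj 3
    fin_cases a
    · exact ⟨2, _, blocks2 X 0 (Or.inl rfl) ha⟩
    · exact ⟨2, _, blocks2 X 1 (Or.inr rfl) ha⟩
    · have ha' : X 2 = 3 := ha
      have h := hacc 2; rw [ha'] at h; exact absurd (by decide) h
    · have ha' : X 3 = 3 := ha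
      have hv' : X 3 = 2 := hv
      rw [hv'] at ha'; exact absurd ha' (by decide)
  · -- X 3 = 3
    by_cases h0 : X 0 = 2
    · have h1 : X 1 ≠ 2 := fun h => absurd (hinj (h.trans h0.symm)) (by decide)
      exact ⟨3, _, blocks3 X 1 (Or.inr rfl) h1 hv⟩
    · exact ⟨3, _, blocks3 X 0 (Or.inl rfl) h0 hv⟩

theorem stmt9 : ∃ H : Market (Fin 4),
    (∀ T : Set (Fin 4), IsAbsorbing H.undominated T ↔ T = {0, 1, 2}) ∧
    (∃ X₁ : Set (Fin 4 × Fin 4), H.IsAllocationOn {0, 1, 2} X₁ ∧ X₁ ⊆ H.undominated) ∧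
    H.InStrongCoreOn {3} {((3 : Fin 4), (3 : Fin 4))} ∧
    (∀ X : Fin 4 → Fin 4, ¬ H.InStrongCore X) :=
  ⟨Hex, absorbing_iff, ⟨X1, X1alloc⟩, dcore, no_core⟩
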